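/- For complex a1,b1,a2,b2 and nonnegative integers p2,q1,q2,l: S_{a1,b1}^{a2,b2,q1+q2}(p2, l) = Σ_{m=0}^{p2+q2} S_{a1,b1}^{a2,b2,q2}(p2, m) · S_{a2, a2·m + b2}(q1, l−m), where S_{a,b}(q,k) = S_{a,b}^{a2,b2,0}(q,k) is the one-parameter generalized Stirling number and S-values with negative second argument are 0. -/

import Mathlib

open Finset
open fwdDiff

/-- Stirling numbers of the second kind. -/
def stirling2 : ℕ → ℕ → ℕ
  | 0, 0 => 1
  | 0, _ + 1 => 0
  | _ + 1, 0 => 0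
  | p + 1, k + 1 => stirling2 p k + (k + 1) * stirling2 p (k + 1)

/-- Unsigned Stirling numbers of the first kind. -/
def stirling1 : ℕ → ℕ → ℕ
  | 0, 0 => 1
  | 0, _ + 1 => 0
  | _ + 1, 0 => 0
  | p + 1, k + 1 => stirling1 p k + p * stirling1 p (k + 1)

/-- Stirling numbers of the second kind with integer second argument (0 when negative). -/
def stirling2Z (p : ℕ) (k : ℤ) : ℤ :=
  if k < 0 then 0 else stirling2 p k.toNat

/-- Generalized Stirling number of the second kind
`S_{a1,b1}^{a2,b2,p2}(p1,k)`. -/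
noncomputable def gsn (a1 b1 a2 b2 : ℂ) (p1 p2 k : ℕ) : ℂ :=
  (1 / (k.factorial : ℂ)) * ∑ j ∈ range (k + 1),
    (-1) ^ j * (k.choose j : ℂ) * (a1 * ((k : ℂ) - j) + b1) ^ p1 *
      (a2 * ((k : ℂ) - j) + b2) ^ p2

/-- Generalized Stirling number with integer index (0 when negative). -/
noncomputable def gsnZ (a1 b1 a2 b2 : ℂ) (p1 p2 : ℕ) (k : ℤ) : ℂ :=
  if k < 0 then 0 else gsn a1 b1 a2 b2 p1 p2 k.toNat

private lemma pow_fwdDiff_van : ∀ (m r : ℕ), r < m →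
    (fwdDiff 1)^[m] (fun i : ℕ => (i : ℂ) ^ r) = 0 := by
  intro m
  induction m with
  | zero => intro r hr; exact absurd hr (Nat.not_lt_zero r)
  | succ m IH =>
    intro r hr
    rw [Function.iterate_succ_apply]
    have h1 : (fwdDiff 1) (fun i : ℕ => (i : ℂ) ^ r)
        = ∑ t ∈ range r, (r.choose t : ℂ) • (fun i : ℕ => (i : ℂ) ^ t) := by
      funext i
      simp only [fwdDiff, Finset.sum_apply, Pi.smul_apply, smul_eq_mul]
      have hb := add_pow (i : ℂ) 1 r
      rw [Finset.sum_range_succ] at hb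
      push_cast
      rw [hb]
      simp only [one_pow, mul_one, Nat.choose_self, Nat.cast_one, add_sub_cancel_right]
      exact Finset.sum_congr rfl fun t _ => by ring
    rw [h1, fwdDiff_iter_finset_sum]
    refine Finset.sum_eq_zero fun t ht => ?_
    rw [fwdDiff_iter_const_smul,
      IH t (lt_of_lt_of_le (mem_range.mp ht) (Nat.lt_succ_iff.mp hr)), smul_zero]

private lemma poly_fwdDiff_van (P : Polynomial ℂ) (m : ℕ) (h : P.natDegree < m) :
    (fwdDiff 1)^[m] (fun i : ℕ => P.eval (i : ℂ)) = 0 := by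
  have hrepr : (fun i : ℕ => P.eval (i : ℂ))
      = ∑ r ∈ range (P.natDegree + 1), P.coeff r • (fun i : ℕ => (i : ℂ) ^ r) := by
    funext i
    rw [Finset.sum_apply]
    simp only [Pi.smul_apply, smul_eq_mul]
    exact P.eval_eq_sum_range (i : ℂ)
  rw [hrepr, fwdDiff_iter_finset_sum]
  refine Finset.sum_eq_zero fun r hr => ?_
  rw [fwdDiff_iter_const_smul, pow_fwdDiff_van m r (by
    have := mem_range.mp hr; omega), smul_zero]

private lemma newton_expand (f : ℕ → ℂ) (d : ℕ)
    (hvan : ∀ m, d < m → (fwdDiff 1)^[m] f = 0) (i : ℕ) :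
    f i = ∑ m ∈ range (d + 1), (i.choose m : ℂ) * (fwdDiff 1)^[m] f 0 := by
  have h0 : f i = ∑ m ∈ range (i + 1), (i.choose m : ℂ) * (fwdDiff 1)^[m] f 0 := by
    have h := shift_eq_sum_fwdDiff_iter 1 f i 0
    simpa [nsmul_eq_mul, smul_eq_mul] using h
  rcases le_total i d with h | h
  · rw [h0]
    refine Finset.sum_subset (range_subset_range.mpr (by omega)) fun m hm hmn => ?_
    have : i < m := by
      simp only [mem_range] at hm hmn; omega
    rw [Nat.choose_eq_zero_of_lt this]
    simp
  · rw [h0]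
    symm
    refine Finset.sum_subset (range_subset_range.mpr (by omega)) fun m hm hmn => ?_
    have hdm : d < m := by
      simp only [mem_range] at hm hmn; omega
    rw [hvan m hdm]
    simp

private lemma choose_swap {l j m : ℕ} (hj : j ≤ l) :
    l.choose j * (l - j).choose m = l.choose m * (l - m).choose j := by
  rcases le_or_gt (j + m) l with h | h
  · have h1 := Nat.choose_mul (n := l) (k := j + m) (s := j) (Nat.le_add_right _ _)
    have h2 := Nat.choose_mul (n := l) (k := j + m) (s := m) (Nat.le_add_left _ _)
    rw [Nat.add_sub_cancel_left] at h1
    rw [Nat.add_sub_cancel] at h2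
    calc l.choose j * (l - j).choose m = l.choose (j + m) * (j + m).choose j := h1.symm
      _ = l.choose (j + m) * (j + m).choose m := by rw [Nat.choose_symm_add]
      _ = l.choose m * (l - m).choose j := h2
  · have h1 : (l - j).choose m = 0 := Nat.choose_eq_zero_of_lt (by omega)
    rcases le_or_gt m l with hm | hm
    · have h2 : (l - m).choose j = 0 := Nat.choose_eq_zero_of_lt (by omega)
      rw [h1, h2, mul_zero, mul_zero]
    · rw [h1, Nat.choose_eq_zero_of_lt hm, mul_zero, zero_mul]

private lemma gsn_eq_fwdDiff (a1 b1 a2 b2 : ℂ) (p1 p2 k : ℕ) :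
    gsn a1 b1 a2 b2 p1 p2 k
      = (1 / (k.factorial : ℂ)) *
        (fwdDiff 1)^[k] (fun i : ℕ => (a1 * (i : ℂ) + b1) ^ p1 * (a2 * (i : ℂ) + b2) ^ p2) 0 := by
  rw [fwdDiff_iter_eq_sum_shift]
  unfold gsn
  congr 1
  have hrefl := Finset.sum_range_reflect
    (fun j => ((-1 : ℂ) ^ j * (k.choose j : ℂ) * (a1 * ((k : ℂ) - j) + b1) ^ p1 *
      (a2 * ((k : ℂ) - j) + b2) ^ p2)) (k + 1)
  simp only [Nat.add_sub_cancel] at hrefl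
  rw [← hrefl]
  refine Finset.sum_congr rfl fun j hj => ?_
  have hj' : j ≤ k := Nat.lt_succ_iff.mp (mem_range.mp hj)
  have hc1 : ((k - j : ℕ) : ℂ) = (k : ℂ) - j := Nat.cast_sub hj'
  rw [Nat.choose_symm hj']
  simp only [smul_eq_mul, zsmul_eq_mul, zero_add, mul_one, hc1]
  push_cast
  ring

theorem stmt14 (a1 b1 a2 b2 : ℂ) (p2 q1 q2 l : ℕ) :
    gsn a1 b1 a2 b2 p2 (q1 + q2) l =
      ∑ m ∈ range (p2 + q2 + 1),
        gsn a1 b1 a2 b2 p2 q2 m * gsnZ a2 (a2 * m + b2) 0 0 q1 0 ((l : ℤ) - m) := by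
  classical
  set F : ℕ → ℂ := fun i => (a1 * (i : ℂ) + b1) ^ p2 * (a2 * (i : ℂ) + b2) ^ q2 with hF
  have hvan : ∀ m : ℕ, p2 + q2 < m → (fwdDiff 1)^[m] F = 0 := by
    intro m hm
    have hFP : F = fun i : ℕ =>
        (((Polynomial.C a1) * Polynomial.X + Polynomial.C b1) ^ p2 *
          ((Polynomial.C a2) * Polynomial.X + Polynomial.C b2) ^ q2).eval (i : ℂ) := by
      funext i; simp [hF]
    have hdeg : (((Polynomial.C a1) * Polynomial.X + Polynomial.C b1) ^ p2 *
        ((Polynomial.C a2) * Polynomial.X + Polynomial.C b2) ^ q2).natDegree ≤ p2 + q2 := by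
      refine le_trans (Polynomial.natDegree_mul_le) (add_le_add ?_ ?_) <;>
      · rw [Polynomial.natDegree_pow]
        calc _ ≤ _ * 1 := Nat.mul_le_mul_left _ Polynomial.natDegree_linear_le
          _ = _ := Nat.mul_one _
    rw [hFP]
    exact poly_fwdDiff_van _ m (by omega)
  have key := newton_expand F (p2 + q2) hvan
  have step1 : ∀ j ∈ range (l + 1),
      (-1 : ℂ) ^ j * (l.choose j : ℂ) * (a1 * ((l : ℂ) - j) + b1) ^ p2 *
        (a2 * ((l : ℂ) - j) + b2) ^ (q1 + q2)
      = ∑ m ∈ range (p2 + q2 + 1),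
          ((fwdDiff 1)^[m] F 0) * ((-1 : ℂ) ^ j * (l.choose m : ℂ) * ((l - m).choose j : ℂ) *
            (a2 * ((l : ℂ) - j) + b2) ^ q1) := by
    intro j hj
    have hj' : j ≤ l := Nat.lt_succ_iff.mp (mem_range.mp hj)
    have hcast : ((l - j : ℕ) : ℂ) = (l : ℂ) - j := Nat.cast_sub hj'
    have hstep : (-1 : ℂ) ^ j * (l.choose j : ℂ) * (a1 * ((l : ℂ) - j) + b1) ^ p2 *
        (a2 * ((l : ℂ) - j) + b2) ^ (q1 + q2)
        = (-1 : ℂ) ^ j * (l.choose j : ℂ) * F (l - j) * (a2 * ((l : ℂ) - j) + b2) ^ q1 := by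
      rw [pow_add, hF]
      simp only [hcast]
      ring
    rw [hstep, key (l - j), Finset.mul_sum, Finset.sum_mul]
    refine Finset.sum_congr rfl fun m _ => ?_
    have hsw : ((l.choose j : ℂ) * ((l - j).choose m : ℂ))
        = ((l.choose m : ℂ) * ((l - m).choose j : ℂ)) := by
      exact_mod_cast congrArg (fun n : ℕ => (n : ℂ)) (choose_swap (m := m) hj')
    linear_combination ((fwdDiff 1)^[m] F 0 * (a2 * ((l : ℂ) - j) + b2) ^ q1 * (-1 : ℂ) ^ j) * hsw
  calc gsn a1 b1 a2 b2 p2 (q1 + q2) l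
      = (1 / (l.factorial : ℂ)) * ∑ j ∈ range (l + 1), ∑ m ∈ range (p2 + q2 + 1),
          ((fwdDiff 1)^[m] F 0) * ((-1 : ℂ) ^ j * (l.choose m : ℂ) * ((l - m).choose j : ℂ) *
            (a2 * ((l : ℂ) - j) + b2) ^ q1) := by
        unfold gsn; exact congrArg _ (Finset.sum_congr rfl step1)
    _ = ∑ m ∈ range (p2 + q2 + 1), ((fwdDiff 1)^[m] F 0) *
          ((1 / (l.factorial : ℂ)) * ∑ j ∈ range (l + 1),
            (-1 : ℂ) ^ j * (l.choose m : ℂ) * ((l - m).choose j : ℂ) *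
              (a2 * ((l : ℂ) - j) + b2) ^ q1) := by
        rw [Finset.sum_comm, Finset.mul_sum]
        refine Finset.sum_congr rfl fun m _ => ?_
        rw [← Finset.mul_sum]
        ring
    _ = ∑ m ∈ range (p2 + q2 + 1),
        gsn a1 b1 a2 b2 p2 q2 m * gsnZ a2 (a2 * m + b2) 0 0 q1 0 ((l : ℤ) - m) := by
        refine Finset.sum_congr rfl fun m _ => ?_
        have hg : gsn a1 b1 a2 b2 p2 q2 m = (1 / (m.factorial : ℂ)) * (fwdDiff 1)^[m] F 0 :=
          gsn_eq_fwdDiff a1 b1 a2 b2 p2 q2 m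
        rcases le_or_gt m l with hml | hml
        · have hnn : ¬ ((l : ℤ) - m < 0) := by omega
          have htn : ((l : ℤ) - m).toNat = l - m := by omega
          unfold gsnZ
          rw [if_neg hnn, htn, hg]
          unfold gsn
          have hcast2 : ((l - m : ℕ) : ℂ) = (l : ℂ) - m := Nat.cast_sub hml
          have hzero : ∀ j ∈ range (l + 1), j ∉ range (l - m + 1) →
              (-1 : ℂ) ^ j * (l.choose m : ℂ) * ((l - m).choose j : ℂ) *
                (a2 * ((l : ℂ) - j) + b2) ^ q1 = 0 := by
            intro j hjm hjn
            have : l - m < j := by simp only [mem_range] at hjm hjn; omega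
            rw [Nat.choose_eq_zero_of_lt this]
            push_cast
            ring
          have htr : ∑ j ∈ range (l + 1),
              (-1 : ℂ) ^ j * (l.choose m : ℂ) * ((l - m).choose j : ℂ) *
                (a2 * ((l : ℂ) - j) + b2) ^ q1
              = (l.choose m : ℂ) * ∑ j ∈ range (l - m + 1),
                  (-1 : ℂ) ^ j * ((l - m).choose j : ℂ) *
                    (a2 * (((l - m : ℕ) : ℂ) - j) + (a2 * m + b2)) ^ q1 := by
            rw [← Finset.sum_subset (range_subset_range.mpr (by omega : l - m + 1 ≤ l + 1)) hzero,
              Finset.mul_sum]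
            refine Finset.sum_congr rfl fun j hj => ?_
            have harg : a2 * (((l - m : ℕ) : ℂ) - j) + (a2 * m + b2)
                = a2 * ((l : ℂ) - j) + b2 := by rw [hcast2]; ring
            rw [harg]; ring
          rw [htr]
          have hfac : (1 / (l.factorial : ℂ)) * (l.choose m : ℂ)
              = (1 / (m.factorial : ℂ)) * (1 / ((l - m).factorial : ℂ)) := by
            have h := Nat.choose_mul_factorial_mul_factorial hml
            have hc : ((l.choose m : ℂ)) * (m.factorial : ℂ) * ((l - m).factorial : ℂ)
                = (l.factorial : ℂ) := by exact_mod_cast congrArg (fun n : ℕ => (n : ℂ)) h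
            have h1 : (l.factorial : ℂ) ≠ 0 := Nat.cast_ne_zero.mpr l.factorial_ne_zero
            have h2 : (m.factorial : ℂ) ≠ 0 := Nat.cast_ne_zero.mpr m.factorial_ne_zero
            have h3 : ((l - m).factorial : ℂ) ≠ 0 :=
              Nat.cast_ne_zero.mpr (l - m).factorial_ne_zero
            field_simp
            linear_combination hc
          simp only [pow_zero, mul_one]
          linear_combination ((fwdDiff 1)^[m] F 0 *
            ∑ j ∈ range (l - m + 1), (-1 : ℂ) ^ j * ((l - m).choose j : ℂ) *
              (a2 * (((l - m : ℕ) : ℂ) - j) + (a2 * m + b2)) ^ q1) * hfac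
        · have hl0 : (l.choose m : ℂ) = 0 := by
            rw [Nat.choose_eq_zero_of_lt hml]; norm_num
          unfold gsnZ
          rw [if_pos (by omega)]
          simp [hl0]
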